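/- Fix an integer q ≥ 2 and reals μ > 0 and R > 0. There does not exist a sequence of (n_i, l_i, M_i) ID codes for the q-ary uniform permutation channel with n_i → ∞, l_i/n_i → 0, M_i ≥ 2^{R · n_i^{l_i(q−1)}}, and error probabilities satisfying λ_{1,i} < n_i^{−l_i·μ} and λ_{2,i} < n_i^{−l_i·μ} for all i. -/

import Mathlib

open Finset

/-- The type class of `x`: all vectors obtained from `x` by permuting its coordinates. -/
def typeClass (q n : ℕ) (x : Fin n → Fin q) : Finset (Fin n → Fin q) :=
  Finset.univ.filter fun y => ∃ σ : Equiv.Perm (Fin n), y = fun k => x (σ k)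

/-- `Q` is a probability mass function on a finite type. -/
def IsPMF {α : Type*} [Fintype α] (Q : α → ℝ) : Prop :=
  (∀ a, 0 ≤ Q a) ∧ ∑ a, Q a = 1

/-- False-acceptance probability `λ_{i→j}` of an `(n, M)` ID code for the `q`-ary
uniform permutation channel. -/
noncomputable def lamFA (q n : ℕ) {M : ℕ} (Q : Fin M → (Fin n → Fin q) → ℝ)
    (D : Fin M → Finset (Fin n → Fin q)) (i j : Fin M) : ℝ :=
  ∑ x, Q i x * (((typeClass q n x ∩ D j).card : ℝ) / ((typeClass q n x).card : ℝ))

/-- Missed-detection probability `λ_{i↛i}` of an `(n, M)` ID code for the `q`-ary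
uniform permutation channel. -/
noncomputable def lamMD (q n : ℕ) {M : ℕ} (Q : Fin M → (Fin n → Fin q) → ℝ)
    (D : Fin M → Finset (Fin n → Fin q)) (i : Fin M) : ℝ :=
  ∑ x, Q i x * (((typeClass q n x \ D i).card : ℝ) / ((typeClass q n x).card : ℝ))


/-- Type class of an `l`-tuple of blocks: the product of the blockwise type classes. -/
def typeClassL (q n l : ℕ) (x : Fin l → Fin n → Fin q) : Finset (Fin l → Fin n → Fin q) :=
  Finset.univ.filter fun y => ∀ s, y s ∈ typeClass q n (x s)

/-- False-acceptance probability `λ_{i→j}` of an `(n, l, M)` (multishot) ID code for the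
`q`-ary uniform permutation channel. -/
noncomputable def lamFAL (q n l : ℕ) {M : ℕ} (Q : Fin M → (Fin l → Fin n → Fin q) → ℝ)
    (D : Fin M → Finset (Fin l → Fin n → Fin q)) (i j : Fin M) : ℝ :=
  ∑ x, Q i x * (((typeClassL q n l x ∩ D j).card : ℝ) / ((typeClassL q n l x).card : ℝ))

/-- Missed-detection probability `λ_{i↛i}` of an `(n, l, M)` (multishot) ID code for the
`q`-ary uniform permutation channel. -/
noncomputable def lamMDL (q n l : ℕ) {M : ℕ} (Q : Fin M → (Fin l → Fin n → Fin q) → ℝ)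
    (D : Fin M → Finset (Fin l → Fin n → Fin q)) (i : Fin M) : ℝ :=
  ∑ x, Q i x * (((typeClassL q n l x \ D i).card : ℝ) / ((typeClassL q n l x).card : ℝ))

def cnt {q n : ℕ} (z : Fin n → Fin q) (c : Fin q) : ℕ :=
  (Finset.univ.filter fun k => z k = c).card

lemma sum_cnt {q n : ℕ} (z : Fin n → Fin q) : ∑ c, cnt z c = n := by
  classical
  have := Finset.card_eq_sum_card_fiberwise
    (f := z) (s := (univ : Finset (Fin n))) (t := (univ : Finset (Fin q)))
    (fun x _ => mem_univ _)
  simpa [cnt, Finset.card_univ] using this.symm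

lemma cnt_le {q n : ℕ} (z : Fin n → Fin q) (c : Fin q) : cnt z c ≤ n := by
  classical
  simpa [cnt] using (Finset.card_filter_le (univ : Finset (Fin n)) (fun k => z k = c)).trans
    (by simp)

lemma cnt_eq_of_perm {q n : ℕ} (x y : Fin n → Fin q) (σ : Equiv.Perm (Fin n))
    (h : y = fun k => x (σ k)) (c : Fin q) : cnt y c = cnt x c := by
  classical
  subst h
  unfold cnt
  apply Finset.card_bij (fun k _ => σ k)
  · intro a ha; simp at ha ⊢; exact ha
  · intro a _ b _ hab; exact σ.injective hab
  · intro b hb; exact ⟨σ.symm b, by simpa using hb, by simp⟩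

lemma perm_of_cnt_eq {q n : ℕ} (x y : Fin n → Fin q)
    (h : ∀ c, cnt y c = cnt x c) : ∃ σ : Equiv.Perm (Fin n), y = fun k => x (σ k) := by
  classical
  have fib : ∀ c : Fin q, {k // y k = c} ≃ {k // x k = c} := by
    intro c
    apply Fintype.equivOfCardEq
    rw [Fintype.card_subtype, Fintype.card_subtype]
    exact h c
  let σ : Equiv.Perm (Fin n) :=
    ((Equiv.sigmaFiberEquiv y).symm.trans (Equiv.sigmaCongrRight fib)).trans
      (Equiv.sigmaFiberEquiv x)
  refine ⟨σ, funext fun k => ?_⟩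
  show y k = x (σ k)
  have : σ k = ((fib (y k)) ⟨k, rfl⟩).1 := rfl
  rw [this]
  exact ((fib (y k)) ⟨k, rfl⟩).2.symm

lemma mem_typeClass_iff {q n : ℕ} (x y : Fin n → Fin q) :
    y ∈ typeClass q n x ↔ ∀ c, cnt y c = cnt x c := by
  constructor
  · intro hy
    simp only [typeClass, mem_filter, mem_univ, true_and] at hy
    obtain ⟨σ, hσ⟩ := hy
    exact fun c => cnt_eq_of_perm x y σ hσ c
  · intro h
    simp only [typeClass, mem_filter, mem_univ, true_and]
    exact perm_of_cnt_eq x y h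

lemma cnt_eq_iff_restrict {q n : ℕ} (hq : 2 ≤ q) (x y : Fin n → Fin q) :
    (∀ c, cnt y c = cnt x c) ↔
      ∀ c : Fin (q - 1), cnt y (Fin.castLE (by omega) c) = cnt x (Fin.castLE (by omega) c) := by
  constructor
  · intro h c; exact h _
  · intro h c
    by_cases hc : (c : ℕ) < q - 1
    · have : c = Fin.castLE (by omega) (⟨c, hc⟩ : Fin (q - 1)) := by
        apply Fin.ext; rfl
      rw [this]; exact h _
    · have hcv : (c : ℕ) = q - 1 := by have := c.2; omega
      have key : ∀ z : Fin n → Fin q,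
          cnt z c + ∑ d : Fin (q-1), cnt z (Fin.castLE (by omega) d) = n := by
        intro z
        have h1 : ∑ d : Fin q, cnt z d = n := sum_cnt z
        have h2 : ∑ d : Fin q, cnt z d = cnt z c + ∑ d ∈ univ.erase c, cnt z d :=
          (Finset.add_sum_erase _ _ (mem_univ c)).symm
        have h3 : ∑ d : Fin (q-1), cnt z (Fin.castLE (by omega) d) =
            ∑ d ∈ univ.erase c, cnt z d := by
          apply Finset.sum_bij (i := fun (d : Fin (q-1)) _ => Fin.castLE (by omega) d)
          · intro a _
            refine Finset.mem_erase.2 ⟨?_, mem_univ _⟩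
            intro hac
            have : (a : ℕ) = (c : ℕ) := by rw [← hac]; rfl
            have := a.2; omega
          · intro a _ b _ hab
            exact Fin.ext (by simpa [Fin.ext_iff] using hab)
          · intro b hb
            have hb' : (b : ℕ) ≠ q - 1 := by
              intro hbv
              exact (Finset.mem_erase.1 hb).1 (Fin.ext (by omega))
            have hblt : (b : ℕ) < q - 1 := by have := b.2; omega
            exact ⟨⟨b, hblt⟩, mem_univ _, Fin.ext rfl⟩
          · intro a _; rfl
        omega
      have k1 := key y
      have k2 := key x
      have heq : ∑ d : Fin (q-1), cnt y (Fin.castLE (by omega) d) =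
          ∑ d : Fin (q-1), cnt x (Fin.castLE (by omega) d) :=
        Finset.sum_congr rfl (fun d _ => h d)
      omega

def tauL (q n l : ℕ) (x : Fin l → Fin n → Fin q) : Fin l → Fin (q-1) → Fin (n+1) :=
  fun s c => ⟨cnt (x s) (Fin.castLE (Nat.sub_le q 1) c), Nat.lt_succ_of_le (cnt_le _ _)⟩

lemma typeClassL_eq_fiber {q n l : ℕ} (hq : 2 ≤ q) (x : Fin l → Fin n → Fin q) :
    typeClassL q n l x = Finset.univ.filter fun y => tauL q n l y = tauL q n l x := by
  ext y
  simp only [typeClassL, mem_filter, mem_univ, true_and]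
  constructor
  · intro hy
    funext s c
    have h1 := (mem_typeClass_iff (x s) (y s)).1 (hy s)
    apply Fin.ext
    exact (cnt_eq_iff_restrict hq (x s) (y s)).1 h1 c
  · intro hy s
    rw [mem_typeClass_iff]
    rw [cnt_eq_iff_restrict hq]
    intro c
    have := congrFun (congrFun hy s) c
    simpa [tauL, Fin.ext_iff] using this

lemma lemA {T : Type*} [Fintype T] [DecidableEq T] {M : ℕ} (P : Fin M → T → ℝ)
    (B : Fin M → Finset T) (ε : ℝ) (hε0 : 0 ≤ ε)
    (hpos : ∀ j t, 0 ≤ P j t) (hsum : ∀ j, ∑ t, P j t = 1)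
    (hBB : ∀ j, 1 - ε ≤ ∑ t ∈ B j, P j t)
    (hBk : ∀ j k, j ≠ k → ∑ t ∈ B k, P j t ≤ ε)
    (hεK : ε ≤ 1 / (16 * (Nat.clog 2 (4 * Fintype.card T) + 1))) :
    M ≤ (Nat.clog 2 (4 * Fintype.card T) + 1) *
      (Fintype.card T) ^ (⌊8 * ε * (Fintype.card T)⌋₊ + 1) := by
  classical
  rcases Nat.eq_zero_or_pos M with hM0 | hMpos
  · omega
  have j0 : Fin M := ⟨0, hMpos⟩
  set N := Fintype.card T with hN
  have hN1 : 1 ≤ N := by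
    by_contra h
    have hN0 : N = 0 := by omega
    have hemp : (univ : Finset T) = ∅ := by
      rw [← Finset.card_eq_zero]; simpa [hN] using hN0
    have hs := hsum j0
    rw [hemp, Finset.sum_empty] at hs
    norm_num at hs
  set sst := Nat.clog 2 (4 * N) with hsst
  set K := sst + 1 with hK
  have h4N : 4 * N ≤ 2 ^ sst := Nat.le_pow_clog (by norm_num) _
  have hsst1 : 1 ≤ sst := by
    by_contra h
    have : sst = 0 := by omega
    rw [this] at h4N; simp at h4N; omega
  have h8N : 2 ^ sst < 8 * N := by
    have hlt := Nat.pow_pred_clog_lt_self (b := 2) (by norm_num) (x := 4 * N) (by omega)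
    rw [Nat.pred_eq_sub_one] at hlt
    have h2 : 2 ^ sst = 2 ^ (sst - 1) * 2 := by
      rw [← pow_succ]; congr 1; omega
    rw [← hsst] at hlt
    omega
  have hKpos : (0:ℝ) < K := by positivity
  have hεK : ε ≤ 1 / (16 * (K:ℝ)) := by
    rw [hK]; push_cast; exact hεK
  have hε14 : ε ≤ 1 / 4 := by
    have h16 : (16:ℝ) ≤ 16 * K := by
      have : (1:ℝ) ≤ K := by exact_mod_cast Nat.one_le_iff_ne_zero.2 (by omega)
      nlinarith
    calc ε ≤ 1 / (16 * K) := hεK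
      _ ≤ 1 / 4 := by
        rw [div_le_div_iff₀ (by positivity) (by norm_num)]
        nlinarith
  -- the threshold sets
  set W : Fin M → ℕ → Finset T := fun j s => (B j).filter (fun t => ((2:ℝ)^s)⁻¹ ≤ P j t)
    with hW
  have hWsubB : ∀ j s, W j s ⊆ B j := fun j s => Finset.filter_subset _ _
  have hWmono : ∀ j s, W j s ⊆ W j (s+1) := by
    intro j s
    simp only [hW]
    intro t ht
    rw [Finset.mem_filter] at ht ⊢
    refine ⟨ht.1, le_trans ?_ ht.2⟩
    rw [inv_le_inv₀ (by positivity) (by positivity)]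
    exact pow_le_pow_right₀ (by norm_num) (by omega)
  have hPle1 : ∀ j t, P j t ≤ 1 := by
    intro j t
    rw [← hsum j]
    exact Finset.single_le_sum (fun t _ => hpos j t) (mem_univ t)
  -- mass of W j sst
  have hmass : ∀ j, (1:ℝ)/2 ≤ ∑ t ∈ W j sst, P j t := by
    intro j
    have hsplit : ∑ t ∈ B j, P j t
        = ∑ t ∈ W j sst, P j t + ∑ t ∈ B j \ W j sst, P j t := by
      rw [add_comm, Finset.sum_sdiff (hWsubB j sst)]
    have htail : ∑ t ∈ B j \ W j sst, P j t ≤ 1/4 := by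
      have hbound : ∀ t ∈ B j \ W j sst, P j t ≤ ((4:ℝ) * N)⁻¹ := by
        intro t ht
        rw [Finset.mem_sdiff, hW, Finset.mem_filter] at ht
        have h1 : ¬ ((2:ℝ)^sst)⁻¹ ≤ P j t := fun h => ht.2 ⟨ht.1, h⟩
        push_neg at h1
        refine le_trans h1.le ?_
        rw [inv_le_inv₀ (by positivity) (by positivity)]
        exact_mod_cast h4N
      calc ∑ t ∈ B j \ W j sst, P j t ≤ ∑ t ∈ B j \ W j sst, ((4:ℝ)*N)⁻¹ :=
            Finset.sum_le_sum hbound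
        _ = (B j \ W j sst).card * ((4:ℝ)*N)⁻¹ := by rw [Finset.sum_const, nsmul_eq_mul]
        _ ≤ N * ((4:ℝ)*N)⁻¹ := by
            have : (B j \ W j sst).card ≤ N := by
              simpa [hN] using Finset.card_le_univ (B j \ W j sst)
            have hNpos : (0:ℝ) < N := by exact_mod_cast hN1
            apply mul_le_mul_of_nonneg_right (by exact_mod_cast this) (by positivity)
        _ = 1/4 := by
            have hNpos : (0:ℝ) < N := by exact_mod_cast hN1
            field_simp
      -- end htail
    have := hBB j
    have h14 := hε14
    linarith
  -- scale selection
  have hscale : ∀ j, ∃ s, s < K ∧ (2:ℝ)^s ≤ 4 * K * ((W j s).card : ℝ) := by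
    intro j
    -- G s : the new elements at scale s
    set G : ℕ → Finset T := fun s => match s with
      | 0 => W j 0
      | (s+1) => W j (s+1) \ W j s with hG
    have hGsub : ∀ s, G s ⊆ W j s := by
      intro s; cases s with
      | zero => exact fun _ ht => ht
      | succ s => exact fun t ht => (Finset.mem_sdiff.1 ht).1
    have hdecomp : ∀ S : ℕ, ∑ t ∈ W j S, P j t = ∑ s ∈ Finset.range (S+1), ∑ t ∈ G s, P j t := by
      intro S
      induction S with
      | zero => simp [hG]
      | succ S ih =>
          rw [Finset.sum_range_succ, ← ih]
          have h := Finset.sum_sdiff (f := P j) (hWmono j S)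
          have hGS : (G (S+1) : Finset T) = W j (S+1) \ W j S := rfl
          rw [hGS]
          linarith
    have hGbound : ∀ s, ∑ t ∈ G s, P j t ≤ ((G s).card : ℝ) * (2 * ((2:ℝ)^s)⁻¹) := by
      intro s
      have hb : ∀ t ∈ G s, P j t ≤ 2 * ((2:ℝ)^s)⁻¹ := by
        intro t ht
        cases s with
        | zero => simpa using (hPle1 j t).trans (by norm_num)
        | succ s =>
            have ht' : t ∉ W j s := (Finset.mem_sdiff.1 ht).2
            have : ¬ ((2:ℝ)^s)⁻¹ ≤ P j t := by
              intro h
              exact ht' (Finset.mem_filter.2 ⟨(hWsubB j (s+1)) ((Finset.mem_sdiff.1 ht).1) , h⟩)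
            push_neg at this
            refine this.le.trans ?_
            rw [pow_succ]
            rw [mul_inv]
            ring_nf
            exact le_refl _
      calc ∑ t ∈ G s, P j t ≤ ∑ t ∈ G s, 2 * ((2:ℝ)^s)⁻¹ := Finset.sum_le_sum hb
        _ = ((G s).card : ℝ) * (2 * ((2:ℝ)^s)⁻¹) := by rw [Finset.sum_const, nsmul_eq_mul]
    by_contra hcon
    push_neg at hcon
    have hlt : ∀ s ∈ Finset.range K, ∑ t ∈ G s, P j t < 1/(2*(K:ℝ)) := by
      intro s hs
      rw [Finset.mem_range] at hs
      have h1 := hcon s hs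
      have h2 := hGbound s
      have hGW : ((G s).card : ℝ) ≤ ((W j s).card : ℝ) := by
        exact_mod_cast Finset.card_le_card (hGsub s)
      have h2pow : (0:ℝ) < 2^s := by positivity
      -- from h1 : 4*K*(W j s).card < 2^s
      have h3 : 4 * K * ((G s).card : ℝ) < 2^s := by
        calc 4 * K * ((G s).card : ℝ) ≤ 4 * K * ((W j s).card : ℝ) := by nlinarith
          _ < 2^s := h1
      have h4 : ((G s).card : ℝ) * (2 * ((2:ℝ)^s)⁻¹) < 1/(2*(K:ℝ)) := by
        have e1 : ((G s).card : ℝ) * (2 * ((2:ℝ)^s)⁻¹)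
            = 2*((G s).card : ℝ)/((2:ℝ)^s) := by
          field_simp
        rw [e1, div_lt_div_iff₀ h2pow (by positivity : (0:ℝ) < 2*(K:ℝ))]
        nlinarith [h3]
      exact lt_of_le_of_lt h2 h4
    have hsum' : ∑ s ∈ Finset.range K, ∑ t ∈ G s, P j t < (K:ℝ) * (1/(2*(K:ℝ))) := by
      have hne : (Finset.range K).Nonempty := ⟨0, Finset.mem_range.2 (by omega)⟩
      calc ∑ s ∈ Finset.range K, ∑ t ∈ G s, P j t
          < ∑ _s ∈ Finset.range K, 1/(2*(K:ℝ)) := Finset.sum_lt_sum_of_nonempty hne hlt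
        _ = (K:ℝ) * (1/(2*(K:ℝ))) := by rw [Finset.sum_const, Finset.card_range, nsmul_eq_mul]
    have hKhalf : (K:ℝ) * (1/(2*(K:ℝ))) = 1/2 := by field_simp
    have := hmass j
    rw [hdecomp sst] at this
    rw [← hK] at this
    linarith [hsum', this]
  choose s hsK hslb using hscale
  -- b
  set b : ℕ → ℕ := fun t => ⌊ε * 2^t⌋₊ with hb
  have hcard : ∀ j, b (s j) + 1 ≤ (W j (s j)).card := by
    intro j
    have hWlb : (2:ℝ)^(s j) / (4*K) ≤ ((W j (s j)).card : ℝ) := by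
      rw [div_le_iff₀ (by positivity)]
      calc (2:ℝ)^(s j) ≤ 4*K*((W j (s j)).card:ℝ) := hslb j
        _ = ((W j (s j)).card : ℝ) * (4*K) := by ring
    have hble : (b (s j) : ℝ) ≤ ε * 2^(s j) := Nat.floor_le (by positivity)
    rcases le_or_gt ((6:ℝ)*K) (2^(s j)) with hbig | hsmall
    · -- big case
      have h1 : (1:ℝ) ≤ 2^(s j)/(6*K) := by
        rw [le_div_iff₀ (by positivity)]; linarith
      have h2 : ε * 2^(s j) ≤ 2^(s j)/(16*K) := by
        rw [le_div_iff₀ (by positivity)]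
        calc ε * 2^(s j) * (16*K) = (ε * (16*K)) * 2^(s j) := by ring
          _ ≤ 1 * 2^(s j) := by
              apply mul_le_mul_of_nonneg_right _ (by positivity)
              calc ε * (16*K) ≤ (1/(16*K)) * (16*K) := by
                    apply mul_le_mul_of_nonneg_right hεK (by positivity)
                _ = 1 := by field_simp
          _ = 2^(s j) := by ring
      have h3 : (b (s j) : ℝ) + 1 ≤ 2^(s j)/(16*K) + 2^(s j)/(6*K) := by linarith
      have h4 : (2:ℝ)^(s j)/(16*K) + 2^(s j)/(6*K) ≤ 2^(s j)/(4*K) := by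
        rw [div_add_div _ _ (by positivity) (by positivity), div_le_div_iff₀ (by positivity) (by positivity)]
        ring_nf
        nlinarith [pow_pos (show (0:ℝ) < 2 by norm_num) (s j), hKpos]
      have : (b (s j) : ℝ) + 1 ≤ ((W j (s j)).card : ℝ) := by linarith
      exact_mod_cast this
    · -- small case : b = 0
      have hb0 : b (s j) = 0 := by
        rw [hb]
        simp only []
        apply Nat.floor_eq_zero.2
        calc ε * 2^(s j) < (1/(16*K)) * (6*K) := by
              apply mul_lt_mul' hεK hsmall (by positivity) (by positivity)
          _ = 6/16 := by field_simp
          _ < 1 := by norm_num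
      rw [hb0]
      have : (0:ℝ) < ((W j (s j)).card : ℝ) := by
        have h2pos : (0:ℝ) < 2^(s j) := by positivity
        nlinarith [hslb j]
      exact_mod_cast Nat.one_le_iff_ne_zero.2 (by exact_mod_cast Nat.pos_of_ne_zero (by
        intro h; rw [h] at this; simp at this) |> Nat.one_le_iff_ne_zero.1)
  have hint : ∀ j k, j ≠ k → ((W j (s j)) ∩ B k).card ≤ b (s j) := by
    intro j k hjk
    apply Nat.le_floor
    have h1 : (((W j (s j)) ∩ B k).card : ℝ) * ((2:ℝ)^(s j))⁻¹
        ≤ ∑ t ∈ (W j (s j)) ∩ B k, P j t := by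
      rw [← nsmul_eq_mul]
      apply Finset.card_nsmul_le_sum
      intro t ht
      have := (Finset.mem_filter.1 (Finset.mem_inter.1 ht).1).2
      exact this
    have h2 : ∑ t ∈ (W j (s j)) ∩ B k, P j t ≤ ∑ t ∈ B k, P j t := by
      apply Finset.sum_le_sum_of_subset_of_nonneg (Finset.inter_subset_right)
      intro t _ _; exact hpos j t
    have h3 := hBk j k hjk
    have h4 : (((W j (s j)) ∩ B k).card : ℝ) * ((2:ℝ)^(s j))⁻¹ ≤ ε := by linarith
    have h2pos : (0:ℝ) < 2^(s j) := by positivity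
    calc (((W j (s j)) ∩ B k).card : ℝ)
        = (((W j (s j)) ∩ B k).card : ℝ) * ((2:ℝ)^(s j))⁻¹ * 2^(s j) := by field_simp
      _ ≤ ε * 2^(s j) := by
          apply mul_le_mul_of_nonneg_right h4 (by positivity)
  -- select subsets
  have hsel : ∀ j, ∃ S : Finset T, S ⊆ W j (s j) ∧ S.card = b (s j) + 1 := by
    intro j
    obtain ⟨S, hS1, hS2⟩ := Finset.exists_subset_card_eq (hcard j)
    exact ⟨S, hS1, hS2⟩
  choose Sel hSel1 hSel2 using hsel
  -- injection
  set F : Fin M → ℕ × Finset T := fun j => (s j, Sel j) with hF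
  have hFinj : Function.Injective F := by
    intro j k hjk'
    by_contra hne
    have hs_eq : s j = s k := congrArg Prod.fst hjk'
    have hS_eq : Sel j = Sel k := congrArg Prod.snd hjk'
    have hsub : Sel j ⊆ (W j (s j)) ∩ B k := by
      intro t ht
      refine Finset.mem_inter.2 ⟨hSel1 j ht, ?_⟩
      have : t ∈ Sel k := hS_eq ▸ ht
      exact (hWsubB k (s k)) (hSel1 k this)
    have := Finset.card_le_card hsub
    rw [hSel2 j] at this
    have := hint j k hne
    omega
  -- counting
  have hcount : M ≤ K * N ^ (b sst + 1) := by
    have himg : (univ : Finset (Fin M)).image F ⊆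
        (Finset.range K).biUnion (fun t => ({t} : Finset ℕ) ×ˢ (univ : Finset T).powersetCard (b t + 1)) := by
      intro p hp
      rw [Finset.mem_image] at hp
      obtain ⟨j, _, hj⟩ := hp
      rw [Finset.mem_biUnion]
      refine ⟨s j, Finset.mem_range.2 (hsK j), ?_⟩
      rw [← hj]
      rw [Finset.mem_product]
      constructor
      · simp [hF]
      · rw [Finset.mem_powersetCard]
        exact ⟨Finset.subset_univ _, hSel2 j⟩
    have hM_eq : ((univ : Finset (Fin M)).image F).card = M := by
      rw [Finset.card_image_of_injective _ hFinj, Finset.card_univ, Fintype.card_fin]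
    have h1 : M ≤ ((Finset.range K).biUnion (fun t => ({t} : Finset ℕ) ×ˢ (univ : Finset T).powersetCard (b t + 1))).card := by
      rw [← hM_eq]; exact Finset.card_le_card himg
    have h2 : ((Finset.range K).biUnion (fun t => ({t} : Finset ℕ) ×ˢ (univ : Finset T).powersetCard (b t + 1))).card
        ≤ ∑ t ∈ Finset.range K, (({t} : Finset ℕ) ×ˢ (univ : Finset T).powersetCard (b t + 1)).card :=
      Finset.card_biUnion_le
    have h3 : ∀ t ∈ Finset.range K, (({t} : Finset ℕ) ×ˢ (univ : Finset T).powersetCard (b t + 1)).card ≤ N ^ (b sst + 1) := by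
      intro t ht
      rw [Finset.card_product, Finset.card_singleton, one_mul, Finset.card_powersetCard, Finset.card_univ]
      calc N.choose (b t + 1) ≤ N ^ (b t + 1) := Nat.choose_le_pow N (b t + 1)
        _ ≤ N ^ (b sst + 1) := by
          apply Nat.pow_le_pow_right hN1
          have : b t ≤ b sst := by
            apply Nat.floor_le_floor
            apply mul_le_mul_of_nonneg_left _ hε0
            apply pow_le_pow_right₀ (by norm_num)
            rw [Finset.mem_range] at ht
            omega
          omega
    calc M ≤ _ := h1
      _ ≤ _ := h2
      _ ≤ ∑ _t ∈ Finset.range K, N ^ (b sst + 1) := Finset.sum_le_sum h3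
      _ = K * N ^ (b sst + 1) := by rw [Finset.sum_const, Finset.card_range, smul_eq_mul]
  -- b sst ≤ ⌊8 ε N⌋
  have hfinal : b sst ≤ ⌊8 * ε * N⌋₊ := by
    apply Nat.floor_le_floor
    calc ε * 2^sst ≤ ε * (8*N) := by
          apply mul_le_mul_of_nonneg_left _ hε0
          exact_mod_cast h8N.le
      _ = 8 * ε * N := by ring
  calc M ≤ K * N ^ (b sst + 1) := hcount
    _ ≤ K * N ^ (⌊8 * ε * N⌋₊ + 1) := by
        apply Nat.mul_le_mul_left
        apply Nat.pow_le_pow_right hN1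
        omega

section Reduction

variable {q n l : ℕ}

noncomputable def fibT (q n l : ℕ) (t : Fin l → Fin (q-1) → Fin (n+1)) :
    Finset (Fin l → Fin n → Fin q) :=
  Finset.univ.filter fun y => tauL q n l y = t

noncomputable def covT (q n l : ℕ) (D : Finset (Fin l → Fin n → Fin q))
    (t : Fin l → Fin (q-1) → Fin (n+1)) : ℝ :=
  ((fibT q n l t ∩ D).card : ℝ) / ((fibT q n l t).card : ℝ)

noncomputable def PT (q n l : ℕ) (Q : (Fin l → Fin n → Fin q) → ℝ)
    (t : Fin l → Fin (q-1) → Fin (n+1)) : ℝ :=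
  ∑ x ∈ Finset.univ.filter (fun x => tauL q n l x = t), Q x

open Classical in
noncomputable def BT (q n l : ℕ) (D : Finset (Fin l → Fin n → Fin q)) :
    Finset (Fin l → Fin (q-1) → Fin (n+1)) :=
  Finset.univ.filter fun t => 1/2 ≤ covT q n l D t

lemma covT_nonneg (D : Finset (Fin l → Fin n → Fin q)) (t) : 0 ≤ covT q n l D t := by
  unfold covT; positivity

lemma covT_le_one (D : Finset (Fin l → Fin n → Fin q)) (t) : covT q n l D t ≤ 1 := by
  unfold covT
  rcases Nat.eq_zero_or_pos (fibT q n l t).card with h | h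
  · rw [Finset.card_eq_zero] at h
    rw [h]
    simp
  · rw [div_le_one (by exact_mod_cast h)]
    exact_mod_cast Finset.card_le_card (Finset.inter_subset_left)

lemma PT_nonneg (Q : (Fin l → Fin n → Fin q) → ℝ) (hQ : ∀ x, 0 ≤ Q x) (t) :
    0 ≤ PT q n l Q t :=
  Finset.sum_nonneg fun x _ => hQ x

lemma PT_sum (Q : (Fin l → Fin n → Fin q) → ℝ) (hQ : ∑ x, Q x = 1) :
    ∑ t, PT q n l Q t = 1 := by
  unfold PT
  rw [Finset.sum_fiberwise_eq_sum_filter]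
  rw [Finset.filter_true_of_mem (fun x _ => mem_univ _)]
  exact hQ

lemma fib_card_pos (x : Fin l → Fin n → Fin q) : 0 < (fibT q n l (tauL q n l x)).card := by
  apply Finset.card_pos.2
  exact ⟨x, by simp [fibT]⟩

-- sum over a set of types of PT = sum of Q over preimage
lemma PT_sum_set (Q : (Fin l → Fin n → Fin q) → ℝ) (S : Finset (Fin l → Fin (q-1) → Fin (n+1))) :
    ∑ t ∈ S, PT q n l Q t
      = ∑ x ∈ Finset.univ.filter (fun x => tauL q n l x ∈ S), Q x := by
  unfold PT
  rw [Finset.sum_fiberwise_eq_sum_filter]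

lemma lamMDL_eq (hq : 2 ≤ q) {M : ℕ} (Q : Fin M → (Fin l → Fin n → Fin q) → ℝ)
    (D : Fin M → Finset (Fin l → Fin n → Fin q)) (j : Fin M) :
    lamMDL q n l Q D j = ∑ x, Q j x * (1 - covT q n l (D j) (tauL q n l x)) := by
  unfold lamMDL
  apply Finset.sum_congr rfl
  intro x _
  congr 1
  have hfib : typeClassL q n l x = fibT q n l (tauL q n l x) := typeClassL_eq_fiber hq x
  rw [hfib]
  unfold covT
  have hpos : (0:ℝ) < ((fibT q n l (tauL q n l x)).card : ℝ) := by
    exact_mod_cast fib_card_pos x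
  have hsd : ((fibT q n l (tauL q n l x) \ D j).card : ℝ)
      = ((fibT q n l (tauL q n l x)).card : ℝ) - ((fibT q n l (tauL q n l x) ∩ D j).card : ℝ) := by
    have := Finset.card_sdiff_add_card_inter (fibT q n l (tauL q n l x)) (D j)
    have h2 : ((fibT q n l (tauL q n l x) \ D j).card + (fibT q n l (tauL q n l x) ∩ D j).card : ℝ)
        = ((fibT q n l (tauL q n l x)).card : ℝ) := by exact_mod_cast this
    push_cast at h2 ⊢
    linarith
  rw [hsd]
  field_simp

lemma lamFAL_eq (hq : 2 ≤ q) {M : ℕ} (Q : Fin M → (Fin l → Fin n → Fin q) → ℝ)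
    (D : Fin M → Finset (Fin l → Fin n → Fin q)) (j k : Fin M) :
    lamFAL q n l Q D j k = ∑ x, Q j x * covT q n l (D k) (tauL q n l x) := by
  unfold lamFAL
  apply Finset.sum_congr rfl
  intro x _
  congr 1
  rw [typeClassL_eq_fiber hq x]
  rfl

lemma claimI (hq : 2 ≤ q) {M : ℕ} (Q : Fin M → (Fin l → Fin n → Fin q) → ℝ)
    (D : Fin M → Finset (Fin l → Fin n → Fin q)) (j : Fin M) (ε : ℝ)
    (hQpos : ∀ x, 0 ≤ Q j x) (hQsum : ∑ x, Q j x = 1)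
    (hMD : lamMDL q n l Q D j ≤ ε) :
    1 - 2*ε ≤ ∑ t ∈ BT q n l (D j), PT q n l (Q j) t := by
  classical
  have hA : ∑ x, Q j x * (1 - covT q n l (D j) (tauL q n l x)) ≤ ε := by
    rw [← lamMDL_eq hq Q D j]; exact hMD
  have hout : ∑ t ∈ (univ \ BT q n l (D j)), PT q n l (Q j) t ≤ 2*ε := by
    rw [PT_sum_set]
    have hle : ∀ x ∈ Finset.univ.filter (fun x => tauL q n l x ∈ univ \ BT q n l (D j)),
        Q j x ≤ 2 * (Q j x * (1 - covT q n l (D j) (tauL q n l x))) := by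
      intro x hx
      rw [Finset.mem_filter, Finset.mem_sdiff] at hx
      have hnb : ¬ (1/2 ≤ covT q n l (D j) (tauL q n l x)) := by
        intro h
        exact hx.2.2 (Finset.mem_filter.2 ⟨mem_univ _, h⟩)
      push_neg at hnb
      have h1 : (1:ℝ) ≤ 2 * (1 - covT q n l (D j) (tauL q n l x)) := by linarith
      nlinarith [hQpos x]
    calc ∑ x ∈ Finset.univ.filter (fun x => tauL q n l x ∈ univ \ BT q n l (D j)), Q j x
        ≤ ∑ x ∈ Finset.univ.filter (fun x => tauL q n l x ∈ univ \ BT q n l (D j)),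
            2 * (Q j x * (1 - covT q n l (D j) (tauL q n l x))) := Finset.sum_le_sum hle
      _ ≤ ∑ x, 2 * (Q j x * (1 - covT q n l (D j) (tauL q n l x))) := by
          apply Finset.sum_le_sum_of_subset_of_nonneg (Finset.filter_subset _ _)
          intro x _ _
          have := covT_le_one (D := D j) (t := tauL q n l x)
          nlinarith [hQpos x]
      _ = 2 * ∑ x, Q j x * (1 - covT q n l (D j) (tauL q n l x)) := by
          rw [Finset.mul_sum]
      _ ≤ 2*ε := by linarith
  have hsplit : ∑ t, PT q n l (Q j) t
      = ∑ t ∈ (univ \ BT q n l (D j)), PT q n l (Q j) t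
        + ∑ t ∈ BT q n l (D j), PT q n l (Q j) t :=
    (Finset.sum_sdiff (Finset.subset_univ _)).symm
  have h1 : ∑ t, PT q n l (Q j) t = 1 := PT_sum (Q j) hQsum
  linarith
  
lemma claimII (hq : 2 ≤ q) {M : ℕ} (Q : Fin M → (Fin l → Fin n → Fin q) → ℝ)
    (D : Fin M → Finset (Fin l → Fin n → Fin q)) (j k : Fin M) (ε : ℝ)
    (hQpos : ∀ x, 0 ≤ Q j x)
    (hFA : lamFAL q n l Q D j k ≤ ε) :
    ∑ t ∈ BT q n l (D k), PT q n l (Q j) t ≤ 2*ε := by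
  classical
  have hA : ∑ x, Q j x * covT q n l (D k) (tauL q n l x) ≤ ε := by
    rw [← lamFAL_eq hq Q D j k]; exact hFA
  rw [PT_sum_set]
  have hle : ∀ x ∈ Finset.univ.filter (fun x => tauL q n l x ∈ BT q n l (D k)),
      Q j x ≤ 2 * (Q j x * covT q n l (D k) (tauL q n l x)) := by
    intro x hx
    rw [Finset.mem_filter] at hx
    have hb : 1/2 ≤ covT q n l (D k) (tauL q n l x) := (Finset.mem_filter.1 hx.2).2
    nlinarith [hQpos x]
  calc ∑ x ∈ Finset.univ.filter (fun x => tauL q n l x ∈ BT q n l (D k)), Q j x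
      ≤ ∑ x ∈ Finset.univ.filter (fun x => tauL q n l x ∈ BT q n l (D k)),
          2 * (Q j x * covT q n l (D k) (tauL q n l x)) := Finset.sum_le_sum hle
    _ ≤ ∑ x, 2 * (Q j x * covT q n l (D k) (tauL q n l x)) := by
        apply Finset.sum_le_sum_of_subset_of_nonneg (Finset.filter_subset _ _)
        intro x _ _
        have := covT_nonneg (D := D k) (t := tauL q n l x)
        nlinarith [hQpos x]
    _ = 2 * ∑ x, Q j x * covT q n l (D k) (tauL q n l x) := by rw [Finset.mul_sum]
    _ ≤ 2*ε := by linarith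

end Reduction

open Filter in
lemma _dummy_open : True := trivial

open Filter

-- ===== analytic helpers =====

lemma log_two_ge : (2:ℝ)/3 ≤ Real.log 2 := by
  have h1 : Real.exp ((2:ℝ)/3) ≤ 2 := by
    have h3 : Real.exp ((2:ℝ)/3) ^ (3:ℕ) = Real.exp 2 := by
      rw [← Real.exp_nat_mul]; norm_num
    have he : Real.exp 2 < 8 := by
      have h2 : Real.exp 2 = Real.exp 1 * Real.exp 1 := by
        rw [← Real.exp_add]; norm_num
      nlinarith [Real.exp_one_lt_d9, Real.exp_pos 1]
    nlinarith [Real.exp_pos ((2:ℝ)/3), sq_nonneg (Real.exp ((2:ℝ)/3) - 2),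
      sq_nonneg (Real.exp ((2:ℝ)/3))]
  calc (2:ℝ)/3 = Real.log (Real.exp ((2:ℝ)/3)) := (Real.log_exp _).symm
    _ ≤ Real.log 2 := Real.log_le_log (Real.exp_pos _) h1

lemma logb_le_log (x : ℝ) (hx : 1 ≤ x) : Real.logb 2 x ≤ (3/2) * Real.log x := by
  rw [Real.logb, div_le_iff₀ (by positivity : (0:ℝ) < Real.log 2)]
  have := log_two_ge
  have hlx : 0 ≤ Real.log x := Real.log_nonneg hx
  nlinarith

lemma exp_half_lt_two : Real.exp (1/2 : ℝ) < 2 := by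
  have h : Real.exp ((1:ℝ)/2) ^ (2:ℕ) = Real.exp 1 := by
    rw [← Real.exp_nat_mul]; norm_num
  nlinarith [Real.exp_pos ((1:ℝ)/2), Real.exp_one_lt_d9]

lemma eventually_nice (q : ℕ) (μ R : ℝ) (hμ : 0 < μ) (hR : 0 < R) :
    ∀ᶠ x : ℝ in atTop,
      2 ≤ x ∧ 2 ≤ x ^ μ ∧ (6 + 3*Real.log x ≤ (R/2)*x) ∧
        ((160 + 48*(q:ℝ)*Real.log x) * x^(-μ) ≤ (1/5) * min 1 (R/4)) := by
  have e1 : ∀ᶠ x : ℝ in atTop, 2 ≤ x := eventually_ge_atTop 2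
  have e2 : ∀ᶠ x : ℝ in atTop, 2 ≤ x ^ μ :=
    (tendsto_rpow_atTop hμ).eventually_ge_atTop 2
  have e3 : ∀ᶠ x : ℝ in atTop, 6 + 3*Real.log x ≤ (R/2)*x := by
    have hlo := Real.isLittleO_log_id_atTop
    have hb := hlo.def (c := R/12) (by positivity)
    filter_upwards [hb, eventually_ge_atTop (max 2 (24/R))] with x hx1 hx2
    have hx2' : 2 ≤ x := le_trans (le_max_left _ _) hx2
    have hx24 : 24/R ≤ x := le_trans (le_max_right _ _) hx2
    have hlog : Real.log x ≤ (R/12)*x := by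
      have : ‖Real.log x‖ ≤ (R/12) * ‖id x‖ := hx1
      rw [Real.norm_eq_abs, Real.norm_eq_abs] at this
      have h1 : |Real.log x| = Real.log x := abs_of_nonneg (Real.log_nonneg (by linarith))
      have h2 : |id x| = x := abs_of_nonneg (by simp; linarith)
      rw [h1, h2] at this
      exact this
    have h6 : 6 ≤ (R/4)*x := by
      rw [div_mul_eq_mul_div, le_div_iff₀ (by norm_num)]
      rw [div_le_iff₀ hR] at hx24
      nlinarith
    nlinarith
  have e4 : ∀ᶠ x : ℝ in atTop,
      (160 + 48*(q:ℝ)*Real.log x) * x^(-μ) ≤ (1/5) * min 1 (R/4) := by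
    have ht : Tendsto (fun x : ℝ => (160 + 48*(q:ℝ)*Real.log x) * x^(-μ)) atTop (nhds 0) := by
      have h1 : Tendsto (fun x : ℝ => (160:ℝ) * x^(-μ)) atTop (nhds 0) := by
        have := (tendsto_rpow_neg_atTop hμ).const_mul (160:ℝ)
        simpa using this
      have h2 : Tendsto (fun x : ℝ => 48*(q:ℝ)*(Real.log x * x^(-μ))) atTop (nhds 0) := by
        have hdiv := (isLittleO_log_rpow_atTop hμ).tendsto_div_nhds_zero
        have heq : ∀ᶠ x : ℝ in atTop, Real.log x / x^μ = Real.log x * x^(-μ) := by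
          filter_upwards [eventually_gt_atTop (0:ℝ)] with x hx
          rw [Real.rpow_neg hx.le, div_eq_mul_inv]
        have := (hdiv.congr' heq).const_mul (48*(q:ℝ))
        simpa using this
      have := h1.add h2
      simp only [add_zero] at this
      apply this.congr
      intro x; ring
    apply ht.eventually_le_const
    have : (0:ℝ) < min 1 (R/4) := lt_min (by norm_num) (by positivity)
    positivity
  filter_upwards [e1, e2, e3, e4] with x h1 h2 h3 h4
  exact ⟨h1, h2, h3, h4⟩


set_option maxHeartbeats 1000000 in
/-- Soft converse II (multishot). -/
theorem multiShotSoftConverseII (q : ℕ) (hq : 2 ≤ q) (μ R : ℝ) (hμ : 0 < μ) (hR : 0 < R)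
    (n : ℕ → ℕ) (hn : Filter.Tendsto n Filter.atTop Filter.atTop)
    (l : ℕ → ℕ) (hlpos : ∀ i, 0 < l i)
    (hl : Filter.Tendsto (fun i => (l i : ℝ) / (n i : ℝ)) Filter.atTop (nhds 0))
    (M : ℕ → ℕ)
    (Q : ∀ i, Fin (M i) → (Fin (l i) → Fin (n i) → Fin q) → ℝ)
    (D : ∀ i, Fin (M i) → Finset (Fin (l i) → Fin (n i) → Fin q))
    (hQ : ∀ i j, IsPMF (Q i j))
    (hM : ∀ i, (2 : ℝ) ^ (R * (n i : ℝ) ^ (l i * (q - 1))) ≤ (M i : ℝ))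
    (h1 : ∀ i j, lamMDL q (n i) (l i) (Q i) (D i) j < (n i : ℝ) ^ (-((l i : ℝ) * μ)))
    (h2 : ∀ i j k, j ≠ k →
      lamFAL q (n i) (l i) (Q i) (D i) j k < (n i : ℝ) ^ (-((l i : ℝ) * μ))) :
    False := by
  classical
  -- pick a good index
  have hev1 : ∀ᶠ i in atTop,
      2 ≤ (n i : ℝ) ∧ 2 ≤ (n i : ℝ) ^ μ ∧ (6 + 3*Real.log (n i) ≤ (R/2)*(n i)) ∧
        ((160 + 48*(q:ℝ)*Real.log (n i)) * (n i : ℝ)^(-μ) ≤ (1/5) * min 1 (R/4)) :=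
    hn.eventually (tendsto_natCast_atTop_atTop.eventually (eventually_nice q μ R hμ hR))
  have hev2 : ∀ᶠ i in atTop, (l i : ℝ) / (n i : ℝ) ≤ 1 / (2*(q-1:ℝ)) := by
    apply hl.eventually_le_const
    have hq1 : (1:ℝ) ≤ (q:ℝ) - 1 := by
      have : (2:ℝ) ≤ (q:ℝ) := by exact_mod_cast hq
      linarith
    positivity
  obtain ⟨i, hnice, hld⟩ := (hev1.and hev2).exists
  obtain ⟨hn2, hnμ, hA2, hA3⟩ := hnice
  -- abbreviations
  set nn := n i with hnn
  set ll := l i with hll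
  set m := ll * (q - 1) with hm
  have hnn2 : 2 ≤ nn := by exact_mod_cast hn2
  have hq1 : (1:ℝ) ≤ (q:ℝ) - 1 := by
    have : (2:ℝ) ≤ (q:ℝ) := by exact_mod_cast hq
    linarith
  set x : ℝ := (nn : ℝ) with hx
  have hx2 : (2:ℝ) ≤ x := hn2
  have hx0 : (0:ℝ) < x := by linarith
  have hx1 : (1:ℝ) ≤ x := by linarith
  have hll1 : 1 ≤ ll := hlpos i
  have hm1 : 1 ≤ m := by
    have h : 1 ≤ q - 1 := by omega
    calc 1 = 1*1 := by ring
      _ ≤ ll * (q-1) := Nat.mul_le_mul hll1 h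
  have hu0 : 0 ≤ Real.log x := Real.log_nonneg hx1
  set u := Real.log x with hu
  set ε : ℝ := x ^ (-((ll : ℝ) * μ)) with hε
  have hε0 : 0 < ε := Real.rpow_pos_of_pos hx0 _
  have hmcast : (m:ℝ) = (ll:ℝ) * ((q:ℝ) - 1) := by
    rw [hm]
    push_cast [Nat.cast_sub (by omega : 1 ≤ q)]
    ring
  -- m ≤ x/2
  have hmx : (m:ℝ) ≤ x/2 := by
    have h1 : (ll:ℝ) * (2*((q:ℝ)-1)) ≤ 1 * x :=
      (div_le_div_iff₀ hx0 (by positivity)).1 hld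
    rw [hmcast]
    linarith
  -- ll * ε ≤ x^(-μ)
  have hllε : (ll:ℝ) * ε ≤ x ^ (-μ) := by
    have h1 : (ll:ℝ) ≤ x ^ (((ll:ℝ) - 1) * μ) := by
      have h2 : ((ll:ℝ) - 1) * μ = μ * ((ll - 1 : ℕ) : ℝ) := by
        push_cast [Nat.cast_sub hll1]
        ring
      rw [h2, Real.rpow_mul hx0.le, Real.rpow_natCast]
      calc (ll:ℝ) ≤ (2:ℝ) ^ (ll - 1 : ℕ) := by
            have := Nat.lt_two_pow_self (n := ll - 1)
            have h3 : ll ≤ 2 ^ (ll - 1) := by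
              have h4 : ll = (ll - 1) + 1 := by omega
              omega
            exact_mod_cast h3
        _ ≤ (x ^ μ) ^ (ll - 1 : ℕ) :=
            pow_le_pow_left₀ (by norm_num) hnμ _
    calc (ll:ℝ) * ε ≤ x ^ (((ll:ℝ) - 1) * μ) * ε := by
          apply mul_le_mul_of_nonneg_right h1 hε0.le
      _ = x ^ (-μ) := by
          rw [hε, ← Real.rpow_add hx0]
          congr 1
          ring
  -- apply the reduction and lemA
  have hQp := fun j => (hQ i j).1
  have hQs := fun j => (hQ i j).2
  have hBB : ∀ j, 1 - 2*ε ≤ ∑ t ∈ BT q nn ll (D i j), PT q nn ll (Q i j) t := by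
    intro j
    exact claimI hq (Q i) (D i) j ε (hQp j) (hQs j) (h1 i j).le
  have hBk : ∀ j k, j ≠ k →
      ∑ t ∈ BT q nn ll (D i k), PT q nn ll (Q i j) t ≤ 2*ε := by
    intro j k hjk
    exact claimII hq (Q i) (D i) j k ε (hQp j) (h2 i j k hjk).le
  -- cardinality of the type space
  set N : ℕ := Fintype.card (Fin ll → Fin (q-1) → Fin (nn+1)) with hN
  have hNcard : N = (nn+1) ^ m := by
    rw [hN, hm]
    simp [Fintype.card_fun, Fintype.card_fin, ← pow_mul]
    ring_nf
  have hN1 : 1 ≤ N := by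
    rw [hNcard]
    exact Nat.one_le_pow _ _ (by omega)
  set sst : ℕ := Nat.clog 2 (4 * N) with hsst
  set K : ℕ := sst + 1 with hK
  have hK1 : 1 ≤ K := by omega
  -- logb bounds
  set lbx := Real.logb 2 x with hlbx
  have hlbx0 : 0 ≤ lbx := Real.logb_nonneg (by norm_num) hx1
  have hlbxu : lbx ≤ (3/2) * u := logb_le_log x hx1
  -- N ≤ 2 x^m
  have hNle : (N:ℝ) ≤ 2 * x ^ m := by
    rw [hNcard]
    push_cast
    have e1 : ((nn:ℝ) + 1) = x * (1 + 1/x) := by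
      field_simp; rw [hx]
    rw [e1, mul_pow]
    have e2 : (1 + 1/x) ^ m ≤ 2 := by
      have h3 : (1 + 1/x) ≤ Real.exp (1/x) := by
        have := Real.add_one_le_exp (1/x)
        linarith
      calc (1 + 1/x) ^ m ≤ (Real.exp (1/x)) ^ m := by
            apply pow_le_pow_left₀ (by positivity) h3
        _ = Real.exp ((m:ℝ) * (1/x)) := by
            rw [← Real.exp_nat_mul]
        _ ≤ Real.exp (1/2) := by
            apply Real.exp_le_exp.2
            rw [mul_one_div, div_le_iff₀ hx0]
            linarith
        _ ≤ 2 := exp_half_lt_two.le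
    calc x^m * (1+1/x)^m ≤ x^m * 2 := by
          apply mul_le_mul_of_nonneg_left e2 (by positivity)
      _ = 2 * x^m := by ring
  have hxm1 : (1:ℝ) ≤ x ^ m := one_le_pow₀ hx1
  -- logb 2 N ≤ 1 + m lbx
  have hlbN : Real.logb 2 (N:ℝ) ≤ 1 + (m:ℝ) * lbx := by
    calc Real.logb 2 (N:ℝ) ≤ Real.logb 2 (2 * x^m) := by
          apply Real.logb_le_logb_of_le (by norm_num) (by exact_mod_cast hN1) hNle
      _ = 1 + (m:ℝ) * lbx := by
          rw [Real.logb_mul (by norm_num) (by positivity), Real.logb_pow,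
            Real.logb_self_eq_one (by norm_num)]
  -- K ≤ 5 + m lbx
  have h4N : 4 * N ≤ 2 ^ sst := Nat.le_pow_clog (by norm_num) _
  have hsst1 : 1 ≤ sst := by
    by_contra h
    have h0 : sst = 0 := by omega
    rw [h0] at h4N
    simp at h4N
    omega
  have h8N : 2 ^ sst < 8 * N := by
    have hlt := Nat.pow_pred_clog_lt_self (b := 2) (by norm_num) (x := 4 * N) (by omega)
    rw [Nat.pred_eq_sub_one] at hlt
    rw [← hsst] at hlt
    have h2 : 2 ^ sst = 2 ^ (sst - 1) * 2 := by
      rw [← pow_succ]; congr 1; omega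
    omega
  have hKle : (K:ℝ) ≤ 5 + (m:ℝ) * lbx := by
    have h1' : (sst:ℝ) ≤ Real.logb 2 ((8:ℝ) * N) := by
      calc (sst:ℝ) = Real.logb 2 ((2:ℝ)^sst) := by
            rw [Real.logb_pow, Real.logb_self_eq_one (by norm_num)]
            ring
        _ ≤ Real.logb 2 ((8:ℝ)*N) := by
            apply Real.logb_le_logb_of_le (by norm_num) (by positivity)
            exact_mod_cast h8N.le
    have h2' : Real.logb 2 ((8:ℝ) * N) ≤ 3 + Real.logb 2 (N:ℝ) := by
      rw [Real.logb_mul (by norm_num) (by exact_mod_cast Nat.one_le_iff_ne_zero.1 hN1)]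
      have h8 : Real.logb 2 (8:ℝ) = 3 := by
        have : (8:ℝ) = 2^(3:ℕ) := by norm_num
        rw [this, Real.logb_pow, Real.logb_self_eq_one (by norm_num)]
        ring
      rw [h8]
    have := hlbN
    push_cast [hK]
    linarith
  have hlbK : Real.logb 2 (K:ℝ) ≤ (K:ℝ) := by
    calc Real.logb 2 (K:ℝ) ≤ Real.logb 2 ((2:ℝ)^K) := by
          apply Real.logb_le_logb_of_le (by norm_num) (by exact_mod_cast hK1)
          exact_mod_cast (Nat.lt_two_pow_self (n := K)).le
      _ = K := by
          rw [Real.logb_pow, Real.logb_self_eq_one (by norm_num)]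
          ring
  -- the epsilon bound: 32 ε (5 + m lbx) ≤ min 1 (R/4)
  have hEbound : 32 * ε * (5 + (m:ℝ)*lbx) ≤ min 1 (R/4) := by
    have h1' : (5:ℝ) + (m:ℝ)*lbx ≤ (ll:ℝ) * (5 + (3/2)*(q:ℝ)*u) := by
      have hmq : (m:ℝ) ≤ (ll:ℝ) * (q:ℝ) := by
        rw [hmcast]
        have hq0 : (0:ℝ) ≤ (q:ℝ) := by positivity
        have hll0 : (0:ℝ) ≤ (ll:ℝ) := by positivity
        nlinarith
      have hll1' : (1:ℝ) ≤ (ll:ℝ) := by exact_mod_cast hll1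
      have hmlbx : (m:ℝ)*lbx ≤ (3/2)*((ll:ℝ)*(q:ℝ)*u) := by
        calc (m:ℝ)*lbx ≤ (m:ℝ)*((3/2)*u) := by
              apply mul_le_mul_of_nonneg_left hlbxu (by positivity)
          _ ≤ ((ll:ℝ)*(q:ℝ))*((3/2)*u) := by
              apply mul_le_mul_of_nonneg_right hmq (by positivity)
          _ = (3/2)*((ll:ℝ)*(q:ℝ)*u) := by ring
      have e : (ll:ℝ) * (5 + (3/2)*(q:ℝ)*u) = 5*(ll:ℝ) + (3/2)*((ll:ℝ)*(q:ℝ)*u) := by ring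
      rw [e]
      linarith
    calc 32 * ε * (5 + (m:ℝ)*lbx) ≤ 32 * ε * ((ll:ℝ) * (5 + (3/2)*(q:ℝ)*u)) := by
          apply mul_le_mul_of_nonneg_left h1' (by positivity)
      _ = 32 * ((ll:ℝ)*ε) * (5 + (3/2)*(q:ℝ)*u) := by ring
      _ ≤ 32 * x^(-μ) * (5 + (3/2)*(q:ℝ)*u) := by
          apply mul_le_mul_of_nonneg_right _ (by positivity)
          apply mul_le_mul_of_nonneg_left hllε (by norm_num)
      _ = (160 + 48*(q:ℝ)*u) * x^(-μ) := by ring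
      _ ≤ (1/5) * min 1 (R/4) := hA3
      _ ≤ min 1 (R/4) := by
          have : (0:ℝ) < min 1 (R/4) := lt_min (by norm_num) (by positivity)
          linarith
  -- apply lemA
  have hεK : 2*ε ≤ 1 / (16 * ((Nat.clog 2 (4 * Fintype.card (Fin ll → Fin (q-1) → Fin (nn+1))) : ℝ) + 1)) := by
    rw [← hN, ← hsst]
    have hKr : ((sst:ℝ) + 1) = (K:ℝ) := by push_cast [hK]; ring
    rw [hKr]
    rw [le_div_iff₀ (by positivity)]
    have hc : 2*ε*(16*(K:ℝ)) = 32*ε*(K:ℝ) := by ring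
    rw [hc]
    calc 32*ε*(K:ℝ) ≤ 32*ε*(5 + (m:ℝ)*lbx) := by
          apply mul_le_mul_of_nonneg_left hKle (by positivity)
      _ ≤ min 1 (R/4) := hEbound
      _ ≤ 1 := min_le_left _ _
  have hMbound := lemA (T := Fin ll → Fin (q-1) → Fin (nn+1))
    (M := M i)
    (fun j => PT q nn ll (Q i j)) (fun j => BT q nn ll (D i j)) (2*ε)
    (by positivity)
    (fun j t => PT_nonneg _ (hQp j) t)
    (fun j => PT_sum _ (hQs j))
    hBB hBk hεK
  -- now the counting contradiction
  set b : ℕ := ⌊8 * (2*ε) * (N:ℝ)⌋₊ with hb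
  have hMle : (M i : ℝ) ≤ (K:ℝ) * (N:ℝ) ^ (b + 1) := by
    have := hMbound
    rw [← hN, ← hsst, ← hK] at this
    have hcast : ((K * N ^ (b+1) : ℕ) : ℝ) = (K:ℝ) * (N:ℝ)^(b+1) := by push_cast; ring
    rw [← hcast]
    exact_mod_cast this
  have hble : (b:ℝ) ≤ 32 * ε * x^m := by
    calc (b:ℝ) ≤ 8 * (2*ε) * (N:ℝ) := Nat.floor_le (by positivity)
      _ ≤ 8 * (2*ε) * (2*x^m) := by
          apply mul_le_mul_of_nonneg_left hNle (by positivity)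
      _ = 32 * ε * x^m := by ring
  -- logb chain
  have hMpos : (0:ℝ) < (M i : ℝ) :=
    lt_of_lt_of_le (Real.rpow_pos_of_pos (by norm_num) _) (hM i)
  have hchain : R * x^m ≤ Real.logb 2 ((K:ℝ) * (N:ℝ)^(b+1)) := by
    calc R * x^m = Real.logb 2 ((2:ℝ) ^ (R * x^m)) :=
          (Real.logb_rpow (by norm_num) (by norm_num)).symm
      _ ≤ Real.logb 2 (M i : ℝ) := by
          apply Real.logb_le_logb_of_le (by norm_num) (Real.rpow_pos_of_pos (by norm_num) _)
          exact hM i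
      _ ≤ Real.logb 2 ((K:ℝ) * (N:ℝ)^(b+1)) := by
          apply Real.logb_le_logb_of_le (by norm_num) hMpos hMle
  have hsplit : Real.logb 2 ((K:ℝ) * (N:ℝ)^(b+1))
      = Real.logb 2 (K:ℝ) + ((b:ℝ)+1) * Real.logb 2 (N:ℝ) := by
    rw [Real.logb_mul (by positivity) (by positivity), Real.logb_pow]
    push_cast
    ring
  -- final numeric contradiction
  have hfin1 : Real.logb 2 (K:ℝ) + ((b:ℝ)+1) * Real.logb 2 (N:ℝ)
      ≤ 6 + 2*(m:ℝ)*lbx + 32*ε*(1 + (m:ℝ)*lbx) * x^m := by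
    have hlbN0 : 0 ≤ Real.logb 2 (N:ℝ) := Real.logb_nonneg (by norm_num) (by exact_mod_cast hN1)
    have t1 : Real.logb 2 (K:ℝ) ≤ 5 + (m:ℝ)*lbx := le_trans hlbK hKle
    have t2 : ((b:ℝ)+1) * Real.logb 2 (N:ℝ) ≤ (32*ε*x^m + 1) * (1 + (m:ℝ)*lbx) := by
      apply mul_le_mul (by linarith) hlbN (by positivity) (by positivity)
    nlinarith [hε0.le, mul_nonneg (mul_nonneg (by norm_num : (0:ℝ) ≤ 32) hε0.le) hlbx0]
  -- G1 : 6 + 3 m u ≤ (R/2) x^m ; and lbx ≤ 3/2 u gives 2 m lbx ≤ 3 m u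
  have hG1 : 6 + 2*(m:ℝ)*lbx ≤ (R/2) * x^m := by
    have h2lbx : 2*(m:ℝ)*lbx ≤ 3*(m:ℝ)*u := by
      have := mul_le_mul_of_nonneg_left hlbxu (by positivity : (0:ℝ) ≤ 2*(m:ℝ))
      nlinarith [hlbx0]
    have hmpow : (m:ℝ) ≤ x ^ (m-1) := by
      calc (m:ℝ) ≤ (2:ℝ)^(m-1) := by
            have h3 : m ≤ 2^(m-1) := by
              have := Nat.lt_two_pow_self (n := m-1)
              omega
            exact_mod_cast h3
        _ ≤ x^(m-1) := pow_le_pow_left₀ (by norm_num) hx2 _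
    have hxm1' : (1:ℝ) ≤ x^(m-1) := one_le_pow₀ hx1
    have hsplitpow : x^(m-1) * x = x^m := by
      rw [← pow_succ]
      congr 1
      omega
    have : 6 + 3*(m:ℝ)*u ≤ x^(m-1) * (6 + 3*u) := by
      nlinarith [mul_le_mul_of_nonneg_right hmpow hu0]
    calc 6 + 2*(m:ℝ)*lbx ≤ 6 + 3*(m:ℝ)*u := by linarith
      _ ≤ x^(m-1) * (6 + 3*u) := this
      _ ≤ x^(m-1) * ((R/2)*x) := by
          apply mul_le_mul_of_nonneg_left _ (by positivity)
          exact hA2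
      _ = (R/2) * x^m := by rw [← hsplitpow]; ring
  have hG2 : 32*ε*(1 + (m:ℝ)*lbx) ≤ R/4 := by
    calc 32*ε*(1 + (m:ℝ)*lbx) ≤ 32*ε*(5 + (m:ℝ)*lbx) := by
          apply mul_le_mul_of_nonneg_left _ (by positivity)
          linarith
      _ ≤ min 1 (R/4) := hEbound
      _ ≤ R/4 := min_le_right _ _
  have hxm0 : (0:ℝ) < x^m := by positivity
  have hfinal : R * x^m ≤ (3*R/4) * x^m := by
    have hc := hchain
    rw [hsplit] at hc
    have h32 : 32*ε*(1 + (m:ℝ)*lbx) * x^m ≤ (R/4) * x^m := by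
      apply mul_le_mul_of_nonneg_right hG2 (by positivity)
    calc R * x^m ≤ 6 + 2*(m:ℝ)*lbx + 32*ε*(1 + (m:ℝ)*lbx) * x^m := le_trans hc hfin1
      _ ≤ (R/2)*x^m + (R/4)*x^m := by linarith
      _ = (3*R/4) * x^m := by ring
  nlinarith [hfinal, hxm0, hR]
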